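/- For n ∈ ℕ, let X_n be n iid St. Petersburg lotteries. For positive integers k, ℓ with ℓ/k = 2^a for some a ∈ ℕ, the average of k of them is first-order stochastically dominated by the average of ℓ of them: (1/k)Σ_{i=1}^k X_i ≤_st (1/ℓ)Σ_{i=1}^ℓ X_i. -/

import Mathlib

open MeasureTheory ProbabilityTheory Real Finset

noncomputable section

variable {Ω : Type*} [MeasurableSpace Ω]

/-- `X ~ Pareto(α)` : cdf `1 - x^(-α)` for `x ≥ 1`. -/
def IsPareto (P : Measure Ω) (α : ℝ) (X : Ω → ℝ) : Prop :=
  Measurable X ∧ (∀ x : ℝ, 1 ≤ x → P {ω | x < X ω} = ENNReal.ofReal (x ^ (-α))) ∧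
    P {ω | X ω < 1} = 0

/-- the increasing rearrangement of a vector -/
def sortedVec {n : ℕ} (f : Fin n → ℝ) : Fin n → ℝ := f ∘ Tuple.sort f

/-- `MajorizedBy θ η` : `θ ⪯ η`, i.e. equal sums and the sum of the `k` smallest
components of `θ` is at least that of `η` for each `k`. -/
def MajorizedBy {n : ℕ} (θ η : Fin n → ℝ) : Prop :=
  (∑ i, θ i = ∑ i, η i) ∧
  ∀ k : ℕ, k ≤ n →
    ∑ i ∈ Finset.univ.filter (fun i : Fin n => (i : ℕ) < k), sortedVec η i ≤
    ∑ i ∈ Finset.univ.filter (fun i : Fin n => (i : ℕ) < k), sortedVec θ i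

/-- St. Petersburg lottery: takes value `2^k` with probability `2^(-k)` for `k ≥ 1`. -/
def IsStPetersburg (P : Measure Ω) (X : Ω → ℝ) : Prop :=
  Measurable X ∧ ∀ k : ℕ, 1 ≤ k → P {ω | X ω = 2 ^ k} = ((2 : ENNReal) ^ k)⁻¹

/- ### Auxiliary development for the proof of `stmt_11` -/

namespace StP

open Set
open scoped Classical

/-- mass of the `k`-th atom. -/
def ck (k : ℕ) : ENNReal := ((2:ENNReal)^(k+1))⁻¹
/-- the `k`-th atom. -/
def pt (k : ℕ) : ℝ := 2^(k+1)

lemma ck_succ (k : ℕ) : ck (k+1) = 2⁻¹ * ck k := by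
  rw [ck, ck, pow_succ _ (k+1),
    ENNReal.mul_inv (Or.inl (by positivity)) (Or.inl (by simp [ENNReal.pow_ne_top])), mul_comm]

/-- canonical St. Petersburg distribution -/
def mu : Measure ℝ := Measure.sum (fun k => ck k • Measure.dirac (pt k))

lemma mu_apply {S : Set ℝ} (hS : MeasurableSet S) :
    mu S = ∑' k, if pt k ∈ S then ck k else 0 := by
  rw [mu, Measure.sum_apply _ hS]
  refine tsum_congr fun k => ?_
  rw [Measure.smul_apply, Measure.dirac_apply' _ hS, Set.indicator_apply]
  by_cases h : pt k ∈ S <;> simp [h]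

lemma tail_tsum (n : ℕ) :
    ∑' k : ℕ, (if n ≤ k then ck k else 0) = ((2:ENNReal)^n)⁻¹ := by
  induction n with
  | zero =>
    simp only [Nat.zero_le, if_true, pow_zero, inv_one]
    have h1 : ∀ k : ℕ, ck k = (2⁻¹:ENNReal)^k * 2⁻¹ := by
      intro k
      rw [ck, pow_succ, ENNReal.mul_inv (Or.inl (by positivity))
        (Or.inl (by simp [ENNReal.pow_ne_top])), ENNReal.inv_pow]
    simp_rw [h1]
    rw [ENNReal.tsum_mul_right, ENNReal.tsum_geometric, ENNReal.one_sub_inv_two, inv_inv]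
    exact ENNReal.mul_inv_cancel (by norm_num) (by norm_num)
  | succ n ih =>
    rw [tsum_eq_zero_add' (f := fun k : ℕ => if n+1 ≤ k then ck k else 0) ENNReal.summable]
    simp only [Nat.not_succ_le_zero, if_false, zero_add, Nat.add_le_add_iff_right]
    have h2 : ∀ k : ℕ, (if n ≤ k then ck (k+1) else 0) = 2⁻¹ * (if n ≤ k then ck k else 0) := by
      intro k
      by_cases h : n ≤ k <;> simp [h, ck_succ]
    simp_rw [h2]
    rw [ENNReal.tsum_mul_left, ih, pow_succ, mul_comm ((2:ENNReal)^n) 2,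
      ENNReal.mul_inv (Or.inl (by norm_num)) (Or.inl (by norm_num))]
    rw [if_neg (by omega), zero_add]

lemma mu_eq_pow {S : Set ℝ} (hS : MeasurableSet S) (n : ℕ) (h : ∀ k, pt k ∈ S ↔ n ≤ k) :
    mu S = ((2:ENNReal)^n)⁻¹ := by
  rw [mu_apply hS, ← tail_tsum n]
  exact tsum_congr fun k => if_congr (h k) rfl rfl

lemma mu_eq_single {S : Set ℝ} (hS : MeasurableSet S) (n : ℕ) (h : ∀ k, pt k ∈ S ↔ k = n) :
    mu S = ck n := by
  rw [mu_apply hS, tsum_eq_single n]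
  · rw [if_pos ((h n).mpr rfl)]
  · intro b hb
    exact if_neg (fun hbS => hb ((h b).mp hbS))

instance : IsProbabilityMeasure mu :=
  ⟨by simpa using mu_eq_pow MeasurableSet.univ 0 (fun k => by simp)⟩

lemma pow_le_pow_iff' {a b : ℕ} : (2:ℝ)^a ≤ 2^b ↔ a ≤ b :=
  pow_le_pow_iff_right₀ one_lt_two

lemma pow_lt_pow_iff' {a b : ℕ} : (2:ℝ)^a < 2^b ↔ a < b :=
  pow_lt_pow_iff_right₀ one_lt_two

lemma mu_Ici_two : mu (Ici (2:ℝ)) = 1 := by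
  have h : ∀ k, pt k ∈ Ici (2:ℝ) ↔ 0 ≤ k := by
    intro k
    simp only [Set.mem_Ici, Nat.zero_le, iff_true, pt]
    calc (2:ℝ) = 2^1 := by norm_num
    _ ≤ 2^(k+1) := pow_le_pow_iff'.mpr (by omega)
  simpa using mu_eq_pow measurableSet_Ici 0 h

lemma mu_Ici_pow (m : ℕ) : mu (Ici ((2:ℝ)^(m+1))) = ((2:ENNReal)^m)⁻¹ := by
  refine mu_eq_pow measurableSet_Ici m (fun k => ?_)
  rw [Set.mem_Ici, pt, pow_le_pow_iff']
  omega

lemma mu_Ico_single (n : ℕ) :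
    mu (Ico ((2:ℝ)^(n+2)) ((2:ℝ)^(n+3))) = ((2:ENNReal)^(n+2))⁻¹ := by
  have h : ∀ k, pt k ∈ Ico ((2:ℝ)^(n+2)) ((2:ℝ)^(n+3)) ↔ k = n+1 := by
    intro k
    rw [Set.mem_Ico, pt, pow_le_pow_iff', pow_lt_pow_iff']
    omega
  rw [mu_eq_single measurableSet_Ico (n+1) h, ck]

lemma mu_head_add (n : ℕ) :
    mu (Ico (2:ℝ) ((2:ℝ)^(n+3))) + mu (Ici ((2:ℝ)^(n+3))) = 1 := by
  have hd : Disjoint (Set.Ico (2:ℝ) ((2:ℝ)^(n+3))) (Set.Ici ((2:ℝ)^(n+3))) :=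
    Set.disjoint_left.mpr (fun x hx hx' => absurd hx.2 (not_lt.mpr hx'))
  rw [← measure_union hd measurableSet_Ici, Set.Ico_union_Ici_eq_Ici ?_, mu_Ici_two]
  calc (2:ℝ) = 2^1 := by norm_num
  _ ≤ 2^(n+3) := pow_le_pow_iff'.mpr (by omega)

lemma core (t : ℝ) :
    (mu.map (fun x => 2*x)) (Set.Ioi t) ≤ (mu.conv mu) (Set.Ioi t) := by
  have hmul : Measurable (fun x : ℝ => 2*x) := measurable_id.const_mul 2
  have hconv : (mu.conv mu) (Set.Ioi t)
      = (mu.prod mu) ((fun p : ℝ × ℝ => p.1 + p.2) ⁻¹' (Set.Ioi t)) := by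
    rw [Measure.conv, Measure.map_apply measurable_add measurableSet_Ioi]
  have hmap : (mu.map (fun x => 2*x)) (Set.Ioi t) = mu (Set.Ioi (t/2)) := by
    rw [Measure.map_apply hmul measurableSet_Ioi]
    congr 1
    ext x
    simp only [Set.mem_preimage, Set.mem_Ioi]
    constructor <;> intro <;> linarith
  rcases lt_or_ge t 4 with h4 | h4
  · -- t < 4 : the convolution lives on [4, ∞)
    rw [hconv]
    have hsub : Set.Ici (2:ℝ) ×ˢ Set.Ici (2:ℝ)
        ⊆ (fun p : ℝ × ℝ => p.1 + p.2) ⁻¹' (Set.Ioi t) := by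
      rintro ⟨x, y⟩ ⟨hx, hy⟩
      simp only [Set.mem_Ici] at hx hy
      simp only [Set.mem_preimage, Set.mem_Ioi]
      linarith
    calc (mu.map (fun x => 2*x)) (Set.Ioi t) ≤ 1 := prob_le_one
    _ = (mu.prod mu) (Set.Ici (2:ℝ) ×ˢ Set.Ici (2:ℝ)) := by
        rw [Measure.prod_prod, mu_Ici_two, one_mul]
    _ ≤ _ := measure_mono hsub
  · -- 4 ≤ t : find n with 2^(n+2) ≤ t < 2^(n+3)
    have ht0 : (0:ℝ) ≤ t := by linarith
    have hfl : 4 ≤ ⌊t⌋₊ := Nat.le_floor (by exact_mod_cast h4)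
    obtain ⟨n, hN⟩ : ∃ n, Nat.log 2 ⌊t⌋₊ = n + 2 := by
      have h24 : 2 ≤ Nat.log 2 ⌊t⌋₊ :=
        (Nat.le_log_iff_pow_le (by norm_num) (by omega)).mpr (by omega)
      exact ⟨Nat.log 2 ⌊t⌋₊ - 2, by omega⟩
    have h1 : (2:ℝ)^(n+2) ≤ t := by
      have h := Nat.pow_log_le_self 2 (show ⌊t⌋₊ ≠ 0 by omega)
      rw [hN] at h
      calc (2:ℝ)^(n+2) = ((2^(n+2) : ℕ) : ℝ) := by push_cast; ring
      _ ≤ (⌊t⌋₊ : ℝ) := by exact_mod_cast h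
      _ ≤ t := Nat.floor_le ht0
    have h2 : t < (2:ℝ)^(n+3) := by
      have h := Nat.lt_pow_succ_log_self (by norm_num : 1 < 2) ⌊t⌋₊
      rw [hN] at h
      calc t < (⌊t⌋₊:ℝ) + 1 := Nat.lt_floor_add_one t
      _ ≤ ((2^(n+3):ℕ):ℝ) := by exact_mod_cast Nat.succ_le_of_lt h
      _ = (2:ℝ)^(n+3) := by push_cast; ring
    -- LHS = (2^(n+1))⁻¹
    have hL : (mu.map (fun x => 2*x)) (Set.Ioi t) = ((2:ENNReal)^(n+1))⁻¹ := by
      rw [hmap]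
      refine mu_eq_pow measurableSet_Ioi (n+1) (fun k => ?_)
      simp only [Set.mem_Ioi, pt]
      constructor
      · intro hk
        by_contra hc
        push_neg at hc
        have hle : (2:ℝ)^(k+1) ≤ 2^(n+1) := pow_le_pow_iff'.mpr (by omega)
        have hh : (2:ℝ)^(n+2) = 2 * 2^(n+1) := by ring
        nlinarith
      · intro hk
        have hp : (2:ℝ)^(n+2) ≤ 2^(k+1) := pow_le_pow_iff'.mpr (by omega)
        have hh : (2:ℝ)^(n+3) = 2 * 2^(n+2) := by ring
        nlinarith
    -- RHS ≥ sum of three rectangles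
    set A1 : Set (ℝ×ℝ) := Set.Ici ((2:ℝ)^(n+3)) ×ˢ Set.Ici (2:ℝ) with hA1
    set A2 : Set (ℝ×ℝ) := Set.Ico (2:ℝ) ((2:ℝ)^(n+3)) ×ˢ Set.Ici ((2:ℝ)^(n+3)) with hA2
    set A3 : Set (ℝ×ℝ) :=
      Set.Ico ((2:ℝ)^(n+2)) ((2:ℝ)^(n+3)) ×ˢ Set.Ico ((2:ℝ)^(n+2)) ((2:ℝ)^(n+3)) with hA3
    have hsub : A1 ∪ (A2 ∪ A3) ⊆ (fun p : ℝ × ℝ => p.1 + p.2) ⁻¹' (Set.Ioi t) := by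
      have hh : (2:ℝ)^(n+3) = 2 * 2^(n+2) := by ring
      rintro ⟨x, y⟩ (⟨hx, hy⟩ | ⟨hx, hy⟩ | ⟨hx, hy⟩) <;>
        simp only [Set.mem_Ici, Set.mem_Ico] at hx hy <;>
        simp only [Set.mem_preimage, Set.mem_Ioi] <;>
        [linarith; linarith; nlinarith]
    have hd1 : Disjoint A1 (A2 ∪ A3) := by
      rw [Set.disjoint_left]
      rintro ⟨x, y⟩ ⟨hx, hy⟩ (⟨hx', hy'⟩ | ⟨hx', hy'⟩) <;>
        simp only [Set.mem_Ici, Set.mem_Ico] at * <;> [exact absurd hx (not_le.2 hx'.2);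
          exact absurd hx (not_le.2 (lt_of_lt_of_le hx'.2 (pow_le_pow_iff'.mpr (by omega))))]
    have hd2 : Disjoint A2 A3 := by
      rw [Set.disjoint_left]
      rintro ⟨x, y⟩ ⟨hx, hy⟩ ⟨hx', hy'⟩
      simp only [Set.mem_Ici, Set.mem_Ico] at *
      exact absurd hy (not_le.2 hy'.2)
    have hm1 : MeasurableSet A1 := measurableSet_Ici.prod measurableSet_Ici
    have hm2 : MeasurableSet A2 := measurableSet_Ico.prod measurableSet_Ici
    have hm3 : MeasurableSet A3 := measurableSet_Ico.prod measurableSet_Ico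
    have key : (mu.prod mu) (A1 ∪ (A2 ∪ A3))
        = (mu.prod mu) A1 + ((mu.prod mu) A2 + (mu.prod mu) A3) := by
      rw [measure_union hd1 (hm2.union hm3), measure_union hd2 hm3]
    set q : ENNReal := ((2:ENNReal)^(n+2))⁻¹ with hq
    set hh : ENNReal := mu (Set.Ico (2:ℝ) ((2:ℝ)^(n+3))) with hhh
    have e1 : (mu.prod mu) A1 = q := by
      rw [hA1, Measure.prod_prod, mu_Ici_two, mul_one]
      exact mu_Ici_pow (n+2)
    have e2 : (mu.prod mu) A2 = hh * q := by
      rw [hA2, Measure.prod_prod, mu_Ici_pow (n+2)]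
    have e3 : (mu.prod mu) A3 = q * q := by
      rw [hA3, Measure.prod_prod, mu_Ico_single n]
    have hq1 : hh + q = 1 := by
      rw [hhh, hq, ← mu_Ici_pow (n+2)]
      exact mu_head_add n
    have etot : (mu.prod mu) (A1 ∪ (A2 ∪ A3)) = q + q := by
      rw [key, e1, e2, e3, ← add_mul, hq1, one_mul]
    have hqq : ((2:ENNReal)^(n+1))⁻¹ = q + q := by
      rw [hq, ← two_mul]
      rw [show ((2:ENNReal)^(n+2)) = 2 * 2^(n+1) by ring,
        ENNReal.mul_inv (Or.inl (by norm_num)) (Or.inl (by norm_num)), ← mul_assoc,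
        ENNReal.mul_inv_cancel (by norm_num) (by norm_num), one_mul]
    rw [hL, hconv, hqq, ← etot]
    exact measure_mono hsub

lemma conv_Iic (ρ σ : Measure ℝ) [SFinite ρ] [SFinite σ] (t : ℝ) :
    (ρ.conv σ) (Set.Iic t) = ∫⁻ x, σ (Set.Iic (t - x)) ∂ρ := by
  rw [Measure.conv, Measure.map_apply measurable_add measurableSet_Iic,
    Measure.prod_apply (measurable_add measurableSet_Iic)]
  refine lintegral_congr fun x => ?_
  congr 1
  ext y
  simp only [Set.mem_preimage, Set.mem_Iic]
  constructor <;> intro <;> linarith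

lemma conv_mono {ρ ρ' σ σ' : Measure ℝ} [IsProbabilityMeasure ρ] [IsProbabilityMeasure ρ']
    [IsProbabilityMeasure σ] [IsProbabilityMeasure σ']
    (h1 : ∀ t, ρ' (Set.Iic t) ≤ ρ (Set.Iic t)) (h2 : ∀ t, σ' (Set.Iic t) ≤ σ (Set.Iic t))
    (t : ℝ) : (ρ'.conv σ') (Set.Iic t) ≤ (ρ.conv σ) (Set.Iic t) := by
  calc (ρ'.conv σ') (Set.Iic t) = ∫⁻ x, σ' (Set.Iic (t-x)) ∂ρ' := conv_Iic _ _ t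
  _ ≤ ∫⁻ x, σ (Set.Iic (t-x)) ∂ρ' := lintegral_mono fun x => h2 _
  _ = (ρ'.conv σ) (Set.Iic t) := (conv_Iic _ _ t).symm
  _ = (σ.conv ρ') (Set.Iic t) := by rw [Measure.conv_comm]
  _ = ∫⁻ y, ρ' (Set.Iic (t-y)) ∂σ := conv_Iic _ _ t
  _ ≤ ∫⁻ y, ρ (Set.Iic (t-y)) ∂σ := lintegral_mono fun y => h1 _
  _ = (σ.conv ρ) (Set.Iic t) := (conv_Iic _ _ t).symm
  _ = (ρ.conv σ) (Set.Iic t) := by rw [Measure.conv_comm]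

lemma conv_assoc (ρ σ τ : Measure ℝ) [SFinite ρ] [SFinite σ] [SFinite τ] :
    (ρ.conv σ).conv τ = ρ.conv (σ.conv τ) := by
  rw [Measure.conv, Measure.conv, Measure.conv, Measure.conv]
  have h1 : (Measure.map (fun p : ℝ×ℝ => p.1+p.2) (ρ.prod σ)).prod τ
      = Measure.map (Prod.map (fun p : ℝ×ℝ => p.1+p.2) id) ((ρ.prod σ).prod τ) := by
    nth_rewrite 1 [show τ = Measure.map id τ by rw [Measure.map_id]]
    rw [Measure.map_prod_map _ _ measurable_add measurable_id]
  have h2 : ρ.prod (Measure.map (fun p : ℝ×ℝ => p.1+p.2) (σ.prod τ))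
      = Measure.map (Prod.map (id : ℝ → ℝ) (fun p : ℝ×ℝ => p.1+p.2)) (ρ.prod (σ.prod τ)) := by
    nth_rewrite 1 [show ρ = Measure.map id ρ by rw [Measure.map_id]]
    rw [Measure.map_prod_map _ _ measurable_id measurable_add]
  rw [h1, h2, Measure.map_map measurable_add (Measurable.prodMap measurable_add measurable_id),
    Measure.map_map measurable_add (measurable_id.prodMap measurable_add),
    ← Measure.prodAssoc_prod,
    Measure.map_map (measurable_add.comp (measurable_id.prodMap measurable_add))
      MeasurableEquiv.prodAssoc.measurable]
  congr 1
  funext p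
  obtain ⟨⟨a, b⟩, c⟩ := p
  simp [MeasurableEquiv.prodAssoc, Prod.map, add_assoc]

lemma map_two_conv (ρ σ : Measure ℝ) [SFinite ρ] [SFinite σ] :
    (ρ.conv σ).map (fun x : ℝ => 2*x)
      = (ρ.map (fun x : ℝ => 2*x)).conv (σ.map (fun x : ℝ => 2*x)) := by
  have hmul : Measurable (fun x : ℝ => 2*x) := measurable_id.const_mul 2
  rw [Measure.conv, Measure.conv, Measure.map_map hmul measurable_add,
    Measure.map_prod_map _ _ hmul hmul, Measure.map_map measurable_add (hmul.prodMap hmul)]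
  congr 1
  funext p
  simp only [Function.comp_apply, Prod.map]
  ring

lemma map_add_indep {Ω : Type*} [MeasurableSpace Ω] (P : Measure Ω) [IsProbabilityMeasure P]
    {f g : Ω → ℝ} (hf : Measurable f) (hg : Measurable g) (hfg : IndepFun f g P) :
    P.map (fun ω => f ω + g ω) = (P.map f).conv (P.map g) := by
  have h := (indepFun_iff_map_prod_eq_prod_map_map hf.aemeasurable hg.aemeasurable).mp hfg
  rw [Measure.conv, ← h, Measure.map_map measurable_add (hf.prodMk hg)]
  rfl

variable {Ω : Type*} [MeasurableSpace Ω] (P : Measure Ω) [IsProbabilityMeasure P]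

lemma map_stp {X : Ω → ℝ} (hX : IsStPetersburg P X) : P.map X = mu := by
  obtain ⟨hm, hp⟩ := hX
  have hA : ∀ k : ℕ, P (X ⁻¹' {pt k}) = ck k := by
    intro k
    have h := hp (k+1) (by omega)
    simpa [pt, ck, Set.preimage, Set.mem_singleton_iff] using h
  have hmeas : ∀ k : ℕ, MeasurableSet (X ⁻¹' {pt k}) :=
    fun k => hm (measurableSet_singleton _)
  have hdis : Pairwise (Function.onFun Disjoint fun k => X ⁻¹' {pt k}) := by
    intro i j hij
    refine Set.disjoint_left.mpr fun ω hωi hωj => hij ?_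
    simp only [Set.mem_preimage, Set.mem_singleton_iff] at hωi hωj
    have hpp : pt i = pt j := hωi ▸ hωj ▸ rfl
    have h1 : (2:ℝ)^(i+1) ≤ 2^(j+1) := le_of_eq hpp
    have h2 : (2:ℝ)^(j+1) ≤ 2^(i+1) := le_of_eq hpp.symm
    rw [pow_le_pow_iff'] at h1 h2
    omega
  have hU : P (⋃ k, X ⁻¹' {pt k}) = 1 := by
    rw [measure_iUnion hdis hmeas]
    simp_rw [hA]
    simpa using tail_tsum 0
  have hUc : P (⋃ k, X ⁻¹' {pt k})ᶜ = 0 := by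
    rw [measure_compl (MeasurableSet.iUnion hmeas) (measure_ne_top _ _), hU, measure_univ]
    simp
  ext S hS
  rw [Measure.map_apply hm hS, mu_apply hS]
  have hXS : P (X ⁻¹' S) = P ((X ⁻¹' S) ∩ ⋃ k, X ⁻¹' {pt k}) := by
    refine le_antisymm ?_ (measure_mono Set.inter_subset_left)
    calc P (X ⁻¹' S)
        ≤ P ((X ⁻¹' S) ∩ (⋃ k, X ⁻¹' {pt k}))
          + P ((X ⁻¹' S) ∩ (⋃ k, X ⁻¹' {pt k})ᶜ) := by
          rw [← measure_inter_add_diff _ (MeasurableSet.iUnion hmeas)]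
          rfl
    _ ≤ P ((X ⁻¹' S) ∩ (⋃ k, X ⁻¹' {pt k})) + P ((⋃ k, X ⁻¹' {pt k})ᶜ) :=
          add_le_add_right (measure_mono Set.inter_subset_right) _
    _ = P ((X ⁻¹' S) ∩ (⋃ k, X ⁻¹' {pt k})) := by rw [hUc, add_zero]
  rw [hXS, Set.inter_iUnion, measure_iUnion ?_ (fun k => (hm hS).inter (hmeas k))]
  · refine tsum_congr fun k => ?_
    by_cases h : pt k ∈ S
    · rw [if_pos h, ← hA k]
      congr 1
      refine Set.inter_eq_self_of_subset_right fun ω hω => ?_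
      simp only [Set.mem_preimage, Set.mem_singleton_iff] at hω ⊢
      rw [hω]; exact h
    · rw [if_neg h]
      convert measure_empty
      · ext ω
        simp only [Set.mem_inter_iff, Set.mem_preimage, Set.mem_singleton_iff,
          Set.mem_empty_iff_false, iff_false, not_and]
        intro h1 h2
        exact h (h2 ▸ h1)
      · infer_instance
  · exact fun i j hij => (hdis hij).mono Set.inter_subset_right Set.inter_subset_right

lemma core_Iic (t : ℝ) :
    (mu.conv mu) (Set.Iic t) ≤ (mu.map (fun x : ℝ => 2*x)) (Set.Iic t) := by
  have hmul : Measurable (fun x : ℝ => 2*x) := measurable_id.const_mul 2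
  haveI : IsProbabilityMeasure (mu.map (fun x : ℝ => 2*x)) :=
    Measure.isProbabilityMeasure_map hmul.aemeasurable
  have h := core t
  have hc : ∀ ν : Measure ℝ, IsProbabilityMeasure ν → ν (Set.Iic t) = 1 - ν (Set.Ioi t) := by
    intro ν hν
    rw [← Set.compl_Ioi, measure_compl measurableSet_Ioi (measure_ne_top _ _), measure_univ]
  rw [hc _ inferInstance, hc _ inferInstance]
  exact tsub_le_tsub_left h 1

variable {X : ℕ → Ω → ℝ}

lemma mapS_succ (hmX : ∀ i, Measurable (X i)) (hmap : ∀ i, P.map (X i) = mu)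
    (hind : iIndepFun X P) (m : ℕ) :
    P.map (fun ω => ∑ i ∈ Finset.range (m+1), X i ω)
      = (P.map (fun ω => ∑ i ∈ Finset.range m, X i ω)).conv mu := by
  have hsum : (fun ω => ∑ i ∈ Finset.range m, X i ω) = ∑ i ∈ Finset.range m, X i := by
    funext ω
    simp [Finset.sum_apply]
  have hi : IndepFun (fun ω => ∑ i ∈ Finset.range m, X i ω) (X m) P := by
    rw [hsum]
    exact hind.indepFun_finsetSum_of_notMem hmX (Finset.notMem_range_self)
  have hSm : Measurable (fun ω => ∑ i ∈ Finset.range m, X i ω) :=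
    Finset.measurable_sum _ (fun i _ => hmX i)
  have h := map_add_indep P hSm (hmX m) hi
  rw [hmap m] at h
  rw [show (fun ω => ∑ i ∈ Finset.range (m+1), X i ω)
      = fun ω => (∑ i ∈ Finset.range m, X i ω) + X m ω from
    funext fun ω => Finset.sum_range_succ _ m]
  exact h

lemma step (hmX : ∀ i, Measurable (X i)) (hmap : ∀ i, P.map (X i) = mu)
    (hind : iIndepFun X P) (n : ℕ) :
    ∀ t : ℝ, (P.map (fun ω => ∑ i ∈ Finset.range (2*n), X i ω)) (Set.Iic t)
      ≤ ((P.map (fun ω => ∑ i ∈ Finset.range n, X i ω)).map (fun x : ℝ => 2*x))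
          (Set.Iic t) := by
  have hmul : Measurable (fun x : ℝ => 2*x) := measurable_id.const_mul 2
  have hSm : ∀ m : ℕ, Measurable (fun ω => ∑ i ∈ Finset.range m, X i ω) :=
    fun m => Finset.measurable_sum _ (fun i _ => hmX i)
  haveI hPm : ∀ m : ℕ, IsProbabilityMeasure (P.map (fun ω => ∑ i ∈ Finset.range m, X i ω)) :=
    fun m => Measure.isProbabilityMeasure_map (hSm m).aemeasurable
  induction n with
  | zero =>
    intro t
    have h0 : ((P.map (fun ω => ∑ i ∈ Finset.range 0, X i ω)).map (fun x : ℝ => 2*x))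
        = P.map (fun ω => ∑ i ∈ Finset.range 0, X i ω) := by
      rw [Measure.map_map hmul (hSm 0)]
      congr 1
      funext ω
      simp
    rw [h0]
  | succ n ih =>
    intro t
    haveI : IsProbabilityMeasure
        ((P.map (fun ω => ∑ i ∈ Finset.range n, X i ω)).map (fun x : ℝ => 2*x)) :=
      Measure.isProbabilityMeasure_map hmul.aemeasurable
    haveI : IsProbabilityMeasure (mu.map (fun x : ℝ => 2*x)) :=
      Measure.isProbabilityMeasure_map hmul.aemeasurable
    set B := (P.map (fun ω => ∑ i ∈ Finset.range n, X i ω)).map (fun x : ℝ => 2*x) with hB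
    have hS2n2 : P.map (fun ω => ∑ i ∈ Finset.range (2*(n+1)), X i ω)
        = ((P.map (fun ω => ∑ i ∈ Finset.range (2*n), X i ω)).conv mu).conv mu := by
      rw [show 2*(n+1) = (2*n+1)+1 from by ring, mapS_succ P hmX hmap hind (2*n+1),
        mapS_succ P hmX hmap hind (2*n)]
    calc (P.map (fun ω => ∑ i ∈ Finset.range (2*(n+1)), X i ω)) (Set.Iic t)
        = (((P.map (fun ω => ∑ i ∈ Finset.range (2*n), X i ω)).conv mu).conv mu)
            (Set.Iic t) := by rw [hS2n2]
      _ ≤ ((B.conv mu).conv mu) (Set.Iic t) :=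
          conv_mono (fun s => conv_mono (fun u => ih u) (fun _ => le_rfl) s)
            (fun _ => le_rfl) t
      _ = (B.conv (mu.conv mu)) (Set.Iic t) := by rw [conv_assoc]
      _ ≤ (B.conv (mu.map (fun x : ℝ => 2*x))) (Set.Iic t) :=
          conv_mono (fun _ => le_rfl) (fun s => core_Iic s) t
      _ = ((P.map (fun ω => ∑ i ∈ Finset.range (n+1), X i ω)).map (fun x : ℝ => 2*x))
            (Set.Iic t) := by
          rw [mapS_succ P hmX hmap hind n, map_two_conv]

end StP

theorem stmt_11 (P : Measure Ω) [IsProbabilityMeasure P]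
    (X : ℕ → Ω → ℝ) (hX : ∀ i, IsStPetersburg P (X i))
    (hind : iIndepFun X P)
    (k l a : ℕ) (hk : 0 < k) (ha : 1 ≤ a) (hl : l = k * 2 ^ a) :
    ∀ x : ℝ,
      P {ω | (1 / k : ℝ) * ∑ i ∈ Finset.range k, X i ω ≤ x} ≥
        P {ω | (1 / l : ℝ) * ∑ i ∈ Finset.range l, X i ω ≤ x} := by
  intro x
  have hmX : ∀ i, Measurable (X i) := fun i => (hX i).1
  have hmap : ∀ i, P.map (X i) = StP.mu := fun i => StP.map_stp P (hX i)
  have hmul : Measurable (fun y : ℝ => 2*y) := measurable_id.const_mul 2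
  have hSm : ∀ m : ℕ, Measurable (fun ω => ∑ i ∈ Finset.range m, X i ω) :=
    fun m => Finset.measurable_sum _ (fun i _ => hmX i)
  -- rewrite events through the pushforward measure
  have hev : ∀ m : ℕ, 0 < m →
      P {ω | (1 / m : ℝ) * ∑ i ∈ Finset.range m, X i ω ≤ x}
        = (P.map (fun ω => ∑ i ∈ Finset.range m, X i ω)) (Set.Iic ((m:ℝ) * x)) := by
    intro m hm
    rw [Measure.map_apply (hSm m) measurableSet_Iic]
    congr 1
    ext ω
    simp only [Set.mem_setOf_eq, Set.mem_preimage, Set.mem_Iic]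
    have hm' : (0:ℝ) < m := by exact_mod_cast hm
    rw [one_div, inv_mul_le_iff₀ hm']
  -- the key chain over powers of two
  have claim : ∀ j : ℕ,
      (P.map (fun ω => ∑ i ∈ Finset.range (k * 2^j), X i ω))
          (Set.Iic (((k * 2^j : ℕ) : ℝ) * x))
        ≤ (P.map (fun ω => ∑ i ∈ Finset.range k, X i ω)) (Set.Iic ((k:ℝ) * x)) := by
    intro j
    induction j with
    | zero => simp
    | succ j ih =>
      have hidx : k * 2^(j+1) = 2 * (k * 2^j) := by ring
      have hth : ((k * 2^(j+1) : ℕ) : ℝ) * x = 2 * (((k * 2^j : ℕ) : ℝ) * x) := by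
        push_cast
        ring
      calc (P.map (fun ω => ∑ i ∈ Finset.range (k * 2^(j+1)), X i ω))
              (Set.Iic (((k * 2^(j+1) : ℕ) : ℝ) * x))
          ≤ ((P.map (fun ω => ∑ i ∈ Finset.range (k * 2^j), X i ω)).map (fun y : ℝ => 2*y))
              (Set.Iic (((k * 2^(j+1) : ℕ) : ℝ) * x)) := by
            rw [show k * 2^(j+1) = 2 * (k * 2^j) from hidx]
            exact StP.step P hmX hmap hind (k * 2^j) _
        _ = (P.map (fun ω => ∑ i ∈ Finset.range (k * 2^j), X i ω))
              (Set.Iic (((k * 2^j : ℕ) : ℝ) * x)) := by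
            rw [Measure.map_apply hmul measurableSet_Iic]
            congr 1
            ext y
            simp only [Set.mem_preimage, Set.mem_Iic, hth]
            constructor <;> intro <;> linarith
        _ ≤ _ := ih
  have hl0 : 0 < l := by
    rw [hl]
    positivity
  rw [ge_iff_le, hev k hk, hev l hl0]
  calc (P.map (fun ω => ∑ i ∈ Finset.range l, X i ω)) (Set.Iic ((l:ℝ) * x))
      = (P.map (fun ω => ∑ i ∈ Finset.range (k * 2^a), X i ω))
          (Set.Iic (((k * 2^a : ℕ) : ℝ) * x)) := by rw [hl]
    _ ≤ _ := claim a
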